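/- As ε → 0, the lowest band function of the stanene lattice λ₁(εω) = 1 − |b(εω)|/4 − √(|b(εω)|² + 4)/4, where b(θ) = (1 + e^{iθ₁} + e^{iθ₂})/2, satisfies λ₁(εω) = (ε²/15)(ω₁² + ω₂² − ω₁ω₂) + O(ε³) for ω = (ω₁,ω₂) on the unit circle. -/

import Mathlib

lemma abs_b_sq (x y : ℝ) :
    ‖(1 + Complex.exp (Complex.I * x) + Complex.exp (Complex.I * y)) / 2‖ ^ 2
      = (3 + 2 * Real.cos x + 2 * Real.cos y + 2 * Real.cos (x - y)) / 4 := by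
  have hx : Complex.exp (Complex.I * x) = Complex.cos x + Complex.sin x * Complex.I := by
    rw [mul_comm, Complex.exp_mul_I]
  have hy : Complex.exp (Complex.I * y) = Complex.cos y + Complex.sin y * Complex.I := by
    rw [mul_comm, Complex.exp_mul_I]
  rw [Complex.sq_norm, hx, hy, Real.cos_sub]
  simp [Complex.normSq_apply, Complex.cos_ofReal_re, Complex.sin_ofReal_re]
  nlinarith [Real.sin_sq_add_cos_sq x, Real.sin_sq_add_cos_sq y]

lemma sqrt_approx {s a K : ℝ} (hs : 1 ≤ s) (ha : 1 ≤ a) (h : |s - a ^ 2| ≤ K) :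
    |Real.sqrt s - a| ≤ K / 2 := by
  have hs0 : (0:ℝ) ≤ s := by linarith
  have h1 : 1 ≤ Real.sqrt s := by
    rw [show (1:ℝ) = Real.sqrt 1 by simp]
    exact Real.sqrt_le_sqrt hs
  have h2 : (Real.sqrt s - a) * (Real.sqrt s + a) = s - a ^ 2 := by
    have := Real.sq_sqrt hs0; nlinarith
  have h3 : |Real.sqrt s - a| * (Real.sqrt s + a) = |s - a ^ 2| := by
    rw [← abs_of_pos (show (0:ℝ) < Real.sqrt s + a by linarith), ← abs_mul, h2]
  nlinarith [abs_nonneg (Real.sqrt s - a)]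

set_option maxHeartbeats 1000000 in
/-- As ε → 0, the lowest stanene band function
λ₁(θ) = 1 − |b(θ)|/4 − √(|b(θ)|² + 4)/4, with b(θ) = (1 + e^{iθ₁} + e^{iθ₂})/2,
satisfies λ₁(εω) = (ε²/15)(ω₁² + ω₂² − ω₁ω₂) + O(ε³) uniformly for ω on the unit circle. -/
theorem stanene_effective_form_expansion :
    ∃ C > (0:ℝ), ∃ δ > (0:ℝ), ∀ ω₁ ω₂ : ℝ, ω₁ ^ 2 + ω₂ ^ 2 = 1 →
      ∀ ε : ℝ, |ε| < δ →
        let b : ℂ := (1 + Complex.exp (Complex.I * (ε * ω₁))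
          + Complex.exp (Complex.I * (ε * ω₂))) / 2
        |(1 - ‖b‖ / 4 - Real.sqrt (‖b‖ ^ 2 + 4) / 4)
          - ε ^ 2 / 15 * (ω₁ ^ 2 + ω₂ ^ 2 - ω₁ * ω₂)| ≤ C * |ε| ^ 3 := by
  refine ⟨1, one_pos, 1/2, by norm_num, ?_⟩
  intro ω₁ ω₂ hω ε hε b
  set s : ℝ := (3 + 2 * Real.cos (ε * ω₁) + 2 * Real.cos (ε * ω₂)
      + 2 * Real.cos (ε * ω₁ - ε * ω₂)) / 4 with hs_def
  have hb : ‖b‖ ^ 2 = s := by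
    show ‖(1 + Complex.exp (Complex.I * (ε * ω₁))
        + Complex.exp (Complex.I * (ε * ω₂))) / 2‖ ^ 2 = s
    rw [show (Complex.I * (↑ε * ↑ω₁)) = Complex.I * ((ε * ω₁ : ℝ) : ℂ) by push_cast; ring,
        show (Complex.I * (↑ε * ↑ω₂)) = Complex.I * ((ε * ω₂ : ℝ) : ℂ) by push_cast; ring]
    exact abs_b_sq _ _
  clear_value b
  -- basic bounds
  have hw1 : ω₁ ^ 2 ≤ 1 := by nlinarith only [sq_nonneg ω₂, hω]
  have hw2 : ω₂ ^ 2 ≤ 1 := by nlinarith only [sq_nonneg ω₁, hω]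
  have hq1 : ω₁ * ω₂ ≤ 1/2 := by nlinarith only [sq_nonneg (ω₁ - ω₂), hω]
  have hq2 : -(1/2) ≤ ω₁ * ω₂ := by nlinarith only [sq_nonneg (ω₁ + ω₂), hω]
  have hεabs : (0:ℝ) ≤ |ε| := abs_nonneg ε
  have hε2 : ε ^ 2 ≤ 1/4 := by nlinarith only [sq_abs ε, hε, hεabs]
  have hε4 : ε ^ 4 ≤ 1/16 := by nlinarith only [hε2, sq_nonneg (ε^2 - 1/4), sq_nonneg ε]
  have he40 : (0:ℝ) ≤ ε ^ 4 := by positivity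
  set Q : ℝ := ω₁ ^ 2 + ω₂ ^ 2 - ω₁ * ω₂ with hQ_def
  have hQlb : 1/2 ≤ Q := by rw [hQ_def]; linarith only [hq1, hω]
  have hQub : Q ≤ 3/2 := by rw [hQ_def]; linarith only [hq2, hω]
  -- cosine bounds
  have hwa1 : |ω₁| ≤ 1 := by nlinarith only [sq_abs ω₁, abs_nonneg ω₁, hw1]
  have hwa2 : |ω₂| ≤ 1 := by nlinarith only [sq_abs ω₂, abs_nonneg ω₂, hw2]
  have hww : (ω₁ - ω₂) ^ 2 ≤ 2 := by nlinarith only [hq2, hω]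
  have hwa3 : |ω₁ - ω₂| ≤ 2 := by
    nlinarith only [sq_abs (ω₁ - ω₂), abs_nonneg (ω₁ - ω₂), hww]
  have habs1 : |ε * ω₁| ≤ 1 := by
    rw [abs_mul]; nlinarith only [hwa1, hε, hεabs, abs_nonneg ω₁]
  have habs2 : |ε * ω₂| ≤ 1 := by
    rw [abs_mul]; nlinarith only [hwa2, hε, hεabs, abs_nonneg ω₂]
  have habs3 : |ε * ω₁ - ε * ω₂| ≤ 1 := by
    have e : |ε * ω₁ - ε * ω₂| = |ε| * |ω₁ - ω₂| := by rw [← abs_mul]; ring_nf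
    rw [e]; nlinarith only [hwa3, hε, hεabs, abs_nonneg (ω₁ - ω₂)]
  have c1 := Real.cos_bound habs1
  have c2 := Real.cos_bound habs2
  have c3 := Real.cos_bound habs3
  have e1 : |ε * ω₁| ^ 4 = (ε * ω₁) ^ 4 := by
    rw [← abs_pow]; exact abs_of_nonneg (by positivity)
  have e2 : |ε * ω₂| ^ 4 = (ε * ω₂) ^ 4 := by
    rw [← abs_pow]; exact abs_of_nonneg (by positivity)
  have e3 : |ε * ω₁ - ε * ω₂| ^ 4 = (ε * ω₁ - ε * ω₂) ^ 4 := by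
    rw [← abs_pow]; exact abs_of_nonneg (by positivity)
  rw [e1] at c1; rw [e2] at c2; rw [e3] at c3
  have p1 : (ε * ω₁) ^ 2 ≤ ε ^ 2 := by nlinarith only [hw1, sq_nonneg ε]
  have p2 : (ε * ω₂) ^ 2 ≤ ε ^ 2 := by nlinarith only [hw2, sq_nonneg ε]
  have p3 : (ε * ω₁ - ε * ω₂) ^ 2 ≤ 2 * ε ^ 2 := by
    have e : (ε * ω₁ - ε * ω₂) ^ 2 = ε ^ 2 * (ω₁ - ω₂) ^ 2 := by ring
    rw [e]; nlinarith only [sq_nonneg ε, hww]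
  have hb1 : (ε * ω₁) ^ 4 ≤ ε ^ 4 := by
    nlinarith only [p1, sq_nonneg (ε * ω₁), sq_nonneg ε]
  have hb2 : (ε * ω₂) ^ 4 ≤ ε ^ 4 := by
    nlinarith only [p2, sq_nonneg (ε * ω₂), sq_nonneg ε]
  have hb3 : (ε * ω₁ - ε * ω₂) ^ 4 ≤ 4 * ε ^ 4 := by
    nlinarith only [p3, sq_nonneg (ε * ω₁ - ε * ω₂), sq_nonneg ε]
  obtain ⟨c1l, c1u⟩ := abs_le.mp c1
  obtain ⟨c2l, c2u⟩ := abs_le.mp c2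
  obtain ⟨c3l, c3u⟩ := abs_le.mp c3
  have hA : |s - (9/4 - ε ^ 2 * Q / 2)| ≤ ε ^ 4 := by
    rw [abs_le]; constructor
    · rw [hs_def, hQ_def]
      linarith only [c1l, c2l, c3l, hb1, hb2, hb3, he40]
    · rw [hs_def, hQ_def]
      linarith only [c1u, c2u, c3u, hb1, hb2, hb3, he40]
  obtain ⟨hAl, hAu⟩ := abs_le.mp hA
  have hQ2 : Q ^ 2 ≤ 9/4 := by nlinarith only [hQlb, hQub]
  have hQ4 : ε ^ 4 * Q ^ 2 ≤ 9/4 * ε ^ 4 := by nlinarith only [he40, hQ2]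
  have hQ40 : 0 ≤ ε ^ 4 * Q ^ 2 := by positivity
  have hQ0 : (0:ℝ) ≤ Q := le_trans (by norm_num) hQlb
  have hεQ : ε ^ 2 * Q ≤ 3/8 := by
    have := mul_le_mul hε2 hQub hQ0 (by norm_num)
    linarith only [this]
  have hεQ0 : 0 ≤ ε ^ 2 * Q := mul_nonneg (sq_nonneg ε) hQ0
  have hs1 : 1 ≤ s := by linarith only [hAl, hεQ, he40, hε4]
  -- first sqrt
  have ha1 : (1:ℝ) ≤ 3/2 - ε ^ 2 * Q / 6 := by linarith only [hεQ]
  have hK1 : |s - (3/2 - ε ^ 2 * Q / 6) ^ 2| ≤ 2 * ε ^ 4 := by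
    rw [abs_le]
    constructor <;> [skip; skip] <;>
      · nlinarith only [hAl, hAu, hQ4, hQ40, he40]
  have h1 := sqrt_approx hs1 ha1 hK1
  -- second sqrt
  have hs2 : (1:ℝ) ≤ s + 4 := by linarith only [hs1]
  have ha2 : (1:ℝ) ≤ 5/2 - ε ^ 2 * Q / 10 := by linarith only [hεQ]
  have hK2 : |s + 4 - (5/2 - ε ^ 2 * Q / 10) ^ 2| ≤ 2 * ε ^ 4 := by
    rw [abs_le]
    constructor <;> [skip; skip] <;>
      · nlinarith only [hAl, hAu, hQ4, hQ40, he40]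
  have h2 := sqrt_approx hs2 ha2 hK2
  -- conclude
  have habsb : ‖b‖ = Real.sqrt s := by
    rw [← hb, Real.sqrt_sq (norm_nonneg _)]
  rw [hb, habsb]
  have key : (1 - Real.sqrt s / 4 - Real.sqrt (s + 4) / 4) - ε ^ 2 / 15 * Q
      = -(((Real.sqrt s - (3/2 - ε ^ 2 * Q / 6))
          + (Real.sqrt (s + 4) - (5/2 - ε ^ 2 * Q / 10))) / 4) := by ring
  rw [key, abs_neg, abs_div]
  have h4 : |ε| ^ 4 = ε ^ 4 := by rw [pow_abs]; exact abs_of_nonneg (by positivity)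
  have habssum := abs_add_le (Real.sqrt s - (3/2 - ε ^ 2 * Q / 6))
    (Real.sqrt (s + 4) - (5/2 - ε ^ 2 * Q / 10))
  have h4' : |(4:ℝ)| = 4 := by norm_num
  rw [h4']
  have hlast : ε ^ 4 ≤ |ε| ^ 3 / 2 := by
    nlinarith only [pow_nonneg hεabs 3, hε, h4, hεabs]
  linarith only [h1, h2, habssum, hlast, pow_nonneg hεabs 3]
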